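/- Over the alphabet {0, 1, 2}, the iterated shuffle of the set {01, 2} satisfies {01, 2}^† = { w ∈ {0,1,2}* : |w|_0 = |w|_1 and every prefix u of w satisfies |u|_0 ≥ |u|_1 }. -/
import Mathlib


/-- `Shuffle u v w` means that the word `w` is an interleaving (shuffle) of the
words `u` and `v`. -/
inductive Shuffle {α : Type*} : List α → List α → List α → Prop
  | nil : Shuffle [] [] []
  | left {a : α} {u v w : List α} : Shuffle u v w → Shuffle (a :: u) v (a :: w)
  | right {a : α} {u v w : List α} : Shuffle u v w → Shuffle u (a :: v) (a :: w)

/-- `IterShuffle S y` means `y` belongs to the iterated shuffle `S^†`, i.e. `y`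
can be obtained by shuffling together finitely many (possibly zero) words of `S`. -/
inductive IterShuffle {α : Type*} (S : Set (List α)) : List α → Prop
  | nil : IterShuffle S []
  | step {u w y : List α} : u ∈ S → IterShuffle S w → Shuffle u w y → IterShuffle S y

lemma shuffle_nil_left {α : Type*} : ∀ v : List α, Shuffle [] v v
  | [] => .nil
  | _ :: v => .right (shuffle_nil_left v)

lemma shuffle_insert {α : Type*} (x : α) : ∀ (A B : List α), Shuffle [x] (A ++ B) (A ++ x :: B)
  | [], B => .left (shuffle_nil_left B)
  | a :: A, B => .right (shuffle_insert x A B)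

lemma shuffle_count {α : Type*} [DecidableEq α] {u v w : List α} (h : Shuffle u v w) (a : α) :
    w.count a = u.count a + v.count a := by
  induction h with
  | nil => simp
  | left _ ih => simp [List.count_cons, ih]; ring
  | right _ ih => simp [List.count_cons, ih]; ring

lemma shuffle_prefix {α : Type*} {u v w : List α} (h : Shuffle u v w) :
    ∀ p, p <+: w → ∃ pu pv, pu <+: u ∧ pv <+: v ∧ Shuffle pu pv p := by
  induction h with
  | nil =>
    intro p hp
    rw [List.prefix_nil] at hp
    subst hp
    exact ⟨[], [], List.nil_prefix, List.nil_prefix, .nil⟩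
  | @left a u v w _ ih =>
    intro p hp
    match p with
    | [] => exact ⟨[], [], List.nil_prefix, List.nil_prefix, .nil⟩
    | b :: p' =>
      rw [List.cons_prefix_cons] at hp
      obtain ⟨rfl, hp'⟩ := hp
      obtain ⟨pu, pv, h1, h2, h3⟩ := ih p' hp'
      exact ⟨b :: pu, pv, List.cons_prefix_cons.mpr ⟨rfl, h1⟩, h2, .left h3⟩
  | @right a u v w _ ih =>
    intro p hp
    match p with
    | [] => exact ⟨[], [], List.nil_prefix, List.nil_prefix, .nil⟩
    | b :: p' =>
      rw [List.cons_prefix_cons] at hp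
      obtain ⟨rfl, hp'⟩ := hp
      obtain ⟨pu, pv, h1, h2, h3⟩ := ih p' hp'
      exact ⟨pu, b :: pv, h1, List.cons_prefix_cons.mpr ⟨rfl, h2⟩, .right h3⟩

lemma prefix_append_cases {α : Type*} {u A B : List α} (h : u <+: A ++ B) :
    u <+: A ∨ ∃ v, v <+: B ∧ u = A ++ v := by
  rcases le_or_gt u.length A.length with hl | hl
  · exact Or.inl (List.prefix_of_prefix_length_le h (A.prefix_append B) hl)
  · have hA : A <+: u :=
      List.prefix_of_prefix_length_le (A.prefix_append B) h (le_of_lt hl)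
    obtain ⟨v, rfl⟩ := hA
    obtain ⟨t, ht⟩ := h
    rw [List.append_assoc, List.append_cancel_left_eq] at ht
    exact Or.inr ⟨v, ⟨t, ht⟩, rfl⟩

/-- Find the first "crossing" position: if a word has more 1s than 0s, it splits
as `A ++ 1 :: B` where every prefix of `A` has at most as many 1s as 0s. -/
lemma dyck_split : ∀ t : List (Fin 3), t.count 0 < t.count 1 →
    ∃ A B, t = A ++ 1 :: B ∧ ∀ u, u <+: A → u.count 1 ≤ u.count 0 := by
  intro t
  induction t with
  | nil => simp
  | cons a s ih =>
    intro h
    by_cases ha : a = 1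
    · subst ha
      refine ⟨[], s, rfl, ?_⟩
      intro u hu
      rw [List.prefix_nil] at hu
      simp [hu]
    · have hs : s.count 0 < s.count 1 := by
        fin_cases a <;> simp_all [List.count_cons] <;> omega
      obtain ⟨A, B, rfl, hA⟩ := ih hs
      refine ⟨a :: A, B, rfl, ?_⟩
      intro u hu
      match u with
      | [] => simp
      | b :: u' =>
        rw [List.cons_prefix_cons] at hu
        obtain ⟨rfl, hu'⟩ := hu
        have := hA u' hu'
        fin_cases b <;>
          first
            | exact absurd rfl ha
            | (simp [List.count_cons]; omega)

lemma dyck_backward : ∀ (n : ℕ) (w : List (Fin 3)), w.length ≤ n →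
    w.count 0 = w.count 1 → (∀ u, u <+: w → u.count 1 ≤ u.count 0) →
    IterShuffle ({[0, 1], [2]} : Set (List (Fin 3))) w := by
  intro n
  induction n with
  | zero =>
    intro w hw _ _
    rw [Nat.le_zero, List.length_eq_zero_iff] at hw
    subst hw; exact .nil
  | succ n ih =>
    intro w hlen hc hpre
    match w with
    | [] => exact .nil
    | a :: t =>
      fin_cases a
      · -- leading letter 0
        have ht : t.count 0 < t.count 1 := by
          simp [List.count_cons] at hc; omega
        obtain ⟨A, B, rfl, hA⟩ := dyck_split t ht
        have hcount : (A ++ B).count 0 = (A ++ B).count 1 := by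
          simp [List.count_cons, List.count_append] at hc ⊢; omega
        have hlen' : (A ++ B).length ≤ n := by
          simp at hlen ⊢; omega
        have hpre' : ∀ u, u <+: A ++ B → u.count 1 ≤ u.count 0 := by
          intro u hu
          rcases prefix_append_cases hu with h | ⟨v, hv, rfl⟩
          · exact hA u h
          · have hp : (0 : Fin 3) :: (A ++ 1 :: v) <+: 0 :: (A ++ 1 :: B) := by
              rw [List.cons_prefix_cons]
              refine ⟨rfl, ?_⟩
              obtain ⟨t', rfl⟩ := hv
              exact ⟨t', by simp⟩
            have := hpre _ hp
            simp [List.count_cons, List.count_append] at this ⊢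
            omega
        have hAB := ih (A ++ B) hlen' hcount hpre'
        exact .step (by simp) hAB (.left (shuffle_insert 1 A B))
      · -- leading letter 1 : impossible
        have := hpre [1] ⟨t, rfl⟩
        simp at this
      · -- leading letter 2
        have hcount : t.count 0 = t.count 1 := by
          simp [List.count_cons] at hc; omega
        have hpre' : ∀ u, u <+: t → u.count 1 ≤ u.count 0 := by
          intro u hu
          have := hpre ((2 : Fin 3) :: u) (List.cons_prefix_cons.mpr ⟨rfl, hu⟩)
          simpa [List.count_cons] using this
        have ht := ih t (by simpa using Nat.lt_succ_iff.mp (Nat.lt_of_lt_of_le (Nat.lt_succ_of_le (Nat.le_refl _)) (by simpa using hlen))) hcount hpre'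
        exact .step (by simp) ht (.left (shuffle_nil_left t))

/-- Over the alphabet `{0, 1, 2}`, the iterated shuffle of `{01, 2}` is exactly
the set of words `w` with `|w|₀ = |w|₁` in which every prefix `u` satisfies
`|u|₀ ≥ |u|₁`. -/
theorem iterShuffle_dyck_example :
    ∀ w : List (Fin 3),
      IterShuffle ({[0, 1], [2]} : Set (List (Fin 3))) w ↔
        (w.count 0 = w.count 1 ∧ ∀ u : List (Fin 3), u <+: w → u.count 1 ≤ u.count 0) := by
  intro w
  constructor
  · intro h
    induction h with
    | nil => simp
    | @step u v y hu _ hs ih =>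
      obtain ⟨ihc, ihp⟩ := ih
      have hcu : u.count 0 = u.count 1 := by
        rcases hu with rfl | rfl <;> simp
      constructor
      · rw [shuffle_count hs 0, shuffle_count hs 1, hcu, ihc]
      · intro p hp
        obtain ⟨pu, pv, h1, h2, h3⟩ := shuffle_prefix hs p hp
        have hpu : pu.count 1 ≤ pu.count 0 := by
          rcases hu with rfl | rfl <;>
            · rw [← List.mem_inits] at h1
              fin_cases h1 <;> simp
        have hpv := ihp pv h2
        rw [shuffle_count h3 0, shuffle_count h3 1]
        omega
  · rintro ⟨hc, hp⟩
    exact dyck_backward w.length w le_rfl hc hp
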